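/- Fix c ∈ ℝ with c ≠ K, positive base-station powers P_{b,k} > 0, and a total mobile-station power P_m > 0. Let R_k = g_m·(k − c)²·P_m for k ∈ {1,…,K}. If (α_1,…,α_K) with α_k > 0 and Σ_{k=1}^K α_k = 1 maximizes the high-SINR sum rate r_H with P_{m,k} = α_k·P_m, then for every k ≠ K: (i) if k = c (so R_k = 0), α_k = (1/α_K − 1/(N_m/R_K + α_K))⁻¹; (ii) if k ≠ c (so R_k > 0), α_k = (−N_m + √(N_m² + 4·α_K·(N_m + R_K·α_K)·R_k)) / (2·R_k). Equivalently, α_k·(N_m + R_k·α_k) = α_K·(N_m + R_K·α_K) for all k. -/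

import Mathlib

lemma aux_deriv (a e Pm h1 h2 pb nb r Nm : ℝ) (ha : 0 < a) (hPm : 0 < Pm)
    (hh1 : 0 < h1) (hh2 : 0 < h2) (hpb : 0 < pb) (hnb : 0 < nb)
    (hr : 0 ≤ r) (hNm : 0 < Nm) :
    HasDerivAt (fun t : ℝ => Real.logb 2 (h1 * ((a + e * t) * Pm) / nb) +
      Real.logb 2 (h2 * pb / (Nm + r * ((a + e * t) * Pm))))
      (e * ((1 / a - r * Pm / (Nm + r * (a * Pm))) / Real.log 2)) 0 := by
  have hβ : HasDerivAt (fun t : ℝ => a + e * t) e 0 := by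
    simpa using ((hasDerivAt_id (0:ℝ)).const_mul e).const_add a
  have ha0 : a + e * 0 = a := by ring
  have hden : 0 < Nm + r * ((a + e * 0) * Pm) := by rw [ha0]; positivity
  have h1inner : HasDerivAt (fun t : ℝ => h1 * ((a + e * t) * Pm) / nb)
      (h1 * (e * Pm) / nb) 0 := ((hβ.mul_const Pm).const_mul h1).div_const nb
  have hf1pos : (0:ℝ) < h1 * ((a + e * 0) * Pm) / nb := by rw [ha0]; positivity
  have h1log := h1inner.log hf1pos.ne'
  have h2denom : HasDerivAt (fun t : ℝ => Nm + r * ((a + e * t) * Pm))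
      (r * (e * Pm)) 0 := ((hβ.mul_const Pm).const_mul r).const_add Nm
  have h2inner := (hasDerivAt_const (0:ℝ) (h2 * pb)).div h2denom hden.ne'
  have hf2pos : (0:ℝ) < h2 * pb / (Nm + r * ((a + e * 0) * Pm)) := by positivity
  have h2log := h2inner.log hf2pos.ne'
  have := (h1log.div_const (Real.log 2)).add (h2log.div_const (Real.log 2))
  simp only [Real.logb]
  convert this using 1
  have hlog2 : Real.log 2 ≠ 0 := (Real.log_pos (by norm_num)).ne'
  any_goals rfl
  simp only [ha0, Pi.div_apply]
  field_simp
  ring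

/-- High-SINR regime: characterization of the optimal mobile-station power
fractions α_k for a fixed canceller position c ≠ K. -/
theorem stmt_16 (K : ℕ) (hK : 1 ≤ K) (c : ℝ) (hc : c ≠ (K : ℝ))
    (hmb hbm : ℕ → ℝ)
    (hhmb : ∀ k ∈ Finset.Icc 1 K, 0 < hmb k)
    (hhbm : ∀ k ∈ Finset.Icc 1 K, 0 < hbm k)
    (gb gm Nb Nm : ℝ)
    (hgb : 0 < gb) (hgm : 0 < gm) (hNb : 0 < Nb) (hNm : 0 < Nm)
    (Pb : ℕ → ℝ) (hPb : ∀ k ∈ Finset.Icc 1 K, 0 < Pb k)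
    (Pm : ℝ) (hPm : 0 < Pm)
    (R : ℕ → ℝ) (hR : ∀ k : ℕ, R k = gm * ((k : ℝ) - c) ^ 2 * Pm)
    (rH : (ℕ → ℝ) → ℝ)
    (hrH : ∀ α : ℕ → ℝ, rH α = ∑ k ∈ Finset.Icc 1 K,
      (Real.logb 2 (hmb k * (α k * Pm) / (Nb + gb * Pb k)) +
       Real.logb 2 (hbm k * Pb k / (Nm + gm * ((k : ℝ) - c) ^ 2 * (α k * Pm)))))
    (α : ℕ → ℝ) (hα : ∀ k ∈ Finset.Icc 1 K, 0 < α k)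
    (hαsum : ∑ k ∈ Finset.Icc 1 K, α k = 1)
    (hmax : ∀ α' : ℕ → ℝ, (∀ k ∈ Finset.Icc 1 K, 0 < α' k) →
      (∑ k ∈ Finset.Icc 1 K, α' k = 1) → rH α' ≤ rH α) :
    (∀ k ∈ Finset.Icc 1 K, k ≠ K →
      (((k : ℝ) = c → α k = (1 / α K - 1 / (Nm / R K + α K))⁻¹) ∧
       ((k : ℝ) ≠ c → α k =
        (-Nm + Real.sqrt (Nm ^ 2 + 4 * α K * (Nm + R K * α K) * R k)) /
          (2 * R k)))) ∧
    (∀ k ∈ Finset.Icc 1 K, α k * (Nm + R k * α k) = α K * (Nm + R K * α K)) := by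
  have hlog2 : Real.log 2 ≠ 0 := (Real.log_pos (by norm_num)).ne'
  have hKmem : K ∈ Finset.Icc 1 K := Finset.mem_Icc.mpr ⟨hK, le_refl K⟩
  have hRnn : ∀ j : ℕ, 0 ≤ R j := fun j => by rw [hR]; positivity
  have hKc : ((K : ℝ) - c) ≠ 0 := sub_ne_zero.mpr (Ne.symm hc)
  have hRK : 0 < R K := by
    rw [hR]
    have : 0 < ((K:ℝ) - c) ^ 2 := by positivity
    positivity
  -- The key first-order optimality condition
  have key : ∀ k ∈ Finset.Icc 1 K,
      α k * (Nm + R k * α k) = α K * (Nm + R K * α K) := by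
    intro k hk
    by_cases hkK : k = K
    · rw [hkK]
    -- the perturbation direction
    set e : ℕ → ℝ := fun j => if j = k then 1 else if j = K then -1 else 0 with he
    have hesplit : ∀ j : ℕ, e j = (if j = k then (1:ℝ) else 0) +
        (if j = K then (-1:ℝ) else 0) := by
      intro j
      by_cases h1 : j = k
      · subst h1; simp [he, hkK]
      · by_cases h2 : j = K
        · subst h2; simp [he, h1]
        · simp [he, h1, h2]
    have hesum : ∑ j ∈ Finset.Icc 1 K, e j = 0 := by
      simp only [hesplit]
      rw [Finset.sum_add_distrib, Finset.sum_ite_eq' _ k, Finset.sum_ite_eq' _ K]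
      simp [hk, hKmem]
    have hBsum : ∀ t : ℝ, ∑ j ∈ Finset.Icc 1 K, (α j + e j * t) = 1 := by
      intro t
      rw [Finset.sum_add_distrib, hαsum, ← Finset.sum_mul, hesum]
      ring
    set ε := min (α k) (α K) with hεdef
    have hε : 0 < ε := lt_min (hα k hk) (hα K hKmem)
    have hβpos : ∀ t : ℝ, |t| < ε → ∀ j ∈ Finset.Icc 1 K, 0 < α j + e j * t := by
      intro t ht j hj
      rw [abs_lt] at ht
      have hεk : ε ≤ α k := min_le_left _ _
      have hεK : ε ≤ α K := min_le_right _ _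
      by_cases h1 : j = k
      · have he1 : e j = 1 := by simp [he, h1]
        rw [he1, h1]; nlinarith
      · by_cases h2 : j = K
        · have he2 : e j = -1 := by simp [he, h1, h2, Ne.symm hkK]
          rw [he2, h2]; nlinarith
        · have he3 : e j = 0 := by simp [he, h1, h2]
          rw [he3]
          have := hα j hj
          nlinarith
    have hβ0 : (fun j => α j + e j * 0) = α := by funext j; ring
    -- local max of the perturbed function
    have hloc : IsLocalMax (fun t : ℝ => rH (fun j => α j + e j * t)) 0 := by
      have hmem : Metric.ball (0:ℝ) ε ∈ nhds (0:ℝ) := Metric.ball_mem_nhds _ hε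
      show ∀ᶠ t in nhds (0:ℝ), rH (fun j => α j + e j * t) ≤
        rH (fun j => α j + e j * 0)
      filter_upwards [hmem] with t ht
      rw [Metric.mem_ball, Real.dist_eq, sub_zero] at ht
      rw [hβ0]
      exact hmax _ (hβpos t ht) (hBsum t)
    -- the derivative
    set w : ℕ → ℝ := fun j => (1 / α j - gm * ((j:ℝ) - c) ^ 2 * Pm /
        (Nm + gm * ((j:ℝ) - c) ^ 2 * (α j * Pm))) / Real.log 2 with hw
    have hgeq : (fun t : ℝ => rH (fun j => α j + e j * t)) =
        fun t => ∑ j ∈ Finset.Icc 1 K,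
          (Real.logb 2 (hmb j * ((α j + e j * t) * Pm) / (Nb + gb * Pb j)) +
           Real.logb 2 (hbm j * Pb j /
             (Nm + gm * ((j:ℝ) - c) ^ 2 * ((α j + e j * t) * Pm)))) := by
      funext t; exact hrH _
    have hd : HasDerivAt (fun t : ℝ => rH (fun j => α j + e j * t))
        (∑ j ∈ Finset.Icc 1 K, e j * w j) 0 := by
      rw [hgeq]
      apply HasDerivAt.fun_sum
      intro j hj
      exact aux_deriv (α j) (e j) Pm (hmb j) (hbm j) (Pb j) (Nb + gb * Pb j)
        (gm * ((j:ℝ) - c) ^ 2) Nm (hα j hj) hPm (hhmb j hj) (hhbm j hj)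
        (hPb j hj) (by have := hPb j hj; positivity) (by positivity) hNm
    have hsum : ∑ j ∈ Finset.Icc 1 K, e j * w j = w k - w K := by
      have : ∀ j : ℕ, e j * w j = (if j = k then w j else 0) +
          (if j = K then -w j else 0) := by
        intro j
        by_cases h1 : j = k
        · subst h1; simp [he, hkK]
        · by_cases h2 : j = K
          · subst h2; simp [he, h1]
          · simp [he, h1, h2]
      simp only [this]
      rw [Finset.sum_add_distrib, Finset.sum_ite_eq' _ k, Finset.sum_ite_eq' _ K]
      simp [hk, hKmem]
      ring
    have hderzero : w k - w K = 0 := by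
      have := hloc.deriv_eq_zero
      rw [hd.deriv, hsum] at this
      exact this
    have hwkK : w k = w K := by linarith
    -- turn the derivative condition into the product equality
    have hαk := hα k hk
    have hαK := hα K hKmem
    have hdk : (0:ℝ) < Nm + gm * ((k:ℝ) - c) ^ 2 * (α k * Pm) := by positivity
    have hdK : (0:ℝ) < Nm + gm * ((K:ℝ) - c) ^ 2 * (α K * Pm) := by positivity
    have hwk : w k = Nm / (α k * (Nm + gm * ((k:ℝ) - c) ^ 2 * (α k * Pm))) /
        Real.log 2 := by
      rw [hw]
      field_simp
      ring
    have hwK : w K = Nm / (α K * (Nm + gm * ((K:ℝ) - c) ^ 2 * (α K * Pm))) /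
        Real.log 2 := by
      rw [hw]
      field_simp
      ring
    rw [hwk, hwK] at hwkK
    rw [hR, hR]
    have hx : (0:ℝ) < α k * (Nm + gm * ((k:ℝ) - c) ^ 2 * (α k * Pm)) := by positivity
    have hy : (0:ℝ) < α K * (Nm + gm * ((K:ℝ) - c) ^ 2 * (α K * Pm)) := by positivity
    have h2 : Nm / (α k * (Nm + gm * ((k:ℝ) - c) ^ 2 * (α k * Pm))) =
        Nm / (α K * (Nm + gm * ((K:ℝ) - c) ^ 2 * (α K * Pm))) :=
      (div_left_inj' hlog2).mp hwkK
    rw [div_eq_div_iff hx.ne' hy.ne'] at h2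
    have h3 := mul_left_cancel₀ hNm.ne' h2
    linear_combination -h3
  constructor
  · intro k hk hkK
    have Ek := key k hk
    have hαk := hα k hk
    have hαK := hα K hKmem
    have hdK : (0:ℝ) < Nm + R K * α K := by nlinarith [hRnn K]
    have hS : (0:ℝ) < α K * (Nm + R K * α K) := by positivity
    constructor
    · intro hkc
      have hRk0 : R k = 0 := by rw [hR, hkc]; ring
      rw [hRk0] at Ek
      have h1 : Nm / R K + α K = (Nm + R K * α K) / R K := by
        field_simp
        try ring
      have h2 : 1 / α K - 1 / (Nm / R K + α K) =
          Nm / (α K * (Nm + R K * α K)) := by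
        rw [h1]
        rw [one_div_div]
        field_simp
        try ring
      rw [h2, inv_div]
      rw [eq_div_iff hNm.ne']
      linarith [Ek]
    · intro hkc
      have hRk : 0 < R k := by
        rw [hR]
        have : ((k:ℝ) - c) ≠ 0 := sub_ne_zero.mpr hkc
        have : 0 < ((k:ℝ) - c) ^ 2 := by positivity
        positivity
      have hsq : Nm ^ 2 + 4 * α K * (Nm + R K * α K) * R k =
          (Nm + 2 * R k * α k) ^ 2 := by nlinarith [Ek]
      rw [hsq, Real.sqrt_sq (by positivity)]
      field_simp
      try ring
  · exact key
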